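/- Let C ⊆ {0,1}^n be a concept class and k ≥ 1. For x ∈ C, define x^{⊗k} ∈ {0,1}^{(n+1)^k}, indexed by tuples (i_1,…,i_k) with 0 ≤ i_m ≤ n, by x^{⊗k}_{i_1,…,i_k} = x_{i_1} ⊕ ⋯ ⊕ x_{i_k} with the convention x₀ = 0, and let C^{⊗k} = { x^{⊗k} : x ∈ C }. If there exists a set S′ of q tuples (i_1,…,i_k) (0 ≤ i_m ≤ n) such that every pair of distinct elements of C^{⊗k} differs on at least one tuple in S′, then there exists a set S ⊆ [n] with |S| ≤ kq such that every pair of distinct concepts in C differs on at least one index in S. -/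

import Mathlib

/-- Extend an `n`-bit string `x` to indices `0,…,n` with `x₀ := 0` (false). -/
noncomputable def extendBit {n : ℕ} (x : Fin n → Bool) : Fin (n + 1) → Bool :=
  Fin.cases false x

/-- The string `x^{⊗k} ∈ {0,1}^{(n+1)^k}`, indexed by tuples `(i₁,…,i_k)` with
`0 ≤ i_m ≤ n`, defined by `x^{⊗k}_{i₁,…,i_k} = x_{i₁} ⊕ ⋯ ⊕ x_{i_k}` (with `x₀ = 0`),
i.e. the parity of the number of positions `m` with `x_{i_m} = 1`. -/
noncomputable def tensPow (n k : ℕ) (x : Fin n → Bool) (i : Fin k → Fin (n + 1)) : Bool :=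
  decide (Odd (Finset.univ.filter fun m : Fin k => extendBit x (i m) = true).card)

/-- If a set `S'` of `q` tuples separates the concept class
`C^{⊗k} = {x^{⊗k} : x ∈ C}`, then there is a set `S ⊆ [n]` of at most `kq` indices
separating `C`. -/
theorem tensor_power_separating_set_to_base
    (n k q : ℕ) (hk : 1 ≤ k)
    (C : Finset (Fin n → Bool))
    (S' : Finset (Fin k → Fin (n + 1))) (hS' : S'.card = q)
    (hsep : ∀ x ∈ C, ∀ y ∈ C, tensPow n k x ≠ tensPow n k y →
      ∃ t ∈ S', tensPow n k x t ≠ tensPow n k y t) :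
    ∃ S : Finset (Fin n), S.card ≤ k * q ∧
      ∀ x ∈ C, ∀ y ∈ C, x ≠ y → ∃ j ∈ S, x j ≠ y j := by
  classical
  set m₀ : Fin k := ⟨0, hk⟩ with hm₀
  refine ⟨S'.biUnion (fun t => Finset.univ.filter fun j : Fin n => ∃ m, t m = j.succ), ?_, ?_⟩
  · calc (S'.biUnion (fun t => Finset.univ.filter fun j : Fin n => ∃ m, t m = j.succ)).card
        ≤ ∑ t ∈ S', (Finset.univ.filter fun j : Fin n => ∃ m, t m = j.succ).card :=
          Finset.card_biUnion_le
      _ ≤ ∑ _t ∈ S', k := by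
          refine Finset.sum_le_sum fun t _ => ?_
          have h1 : (Finset.univ.filter fun j : Fin n => ∃ m, t m = j.succ).card
              ≤ (Finset.univ.image t).card := by
            apply Finset.card_le_card_of_injOn Fin.succ
            · intro j hj
              simp only [Finset.mem_coe, Finset.mem_filter] at hj
              obtain ⟨m, hm⟩ := hj.2
              exact Finset.mem_image.2 ⟨m, Finset.mem_univ _, hm⟩
            · intro a _ b _ hab
              exact Fin.succ_injective _ hab
          calc _ ≤ (Finset.univ.image t).card := h1
            _ ≤ (Finset.univ : Finset (Fin k)).card := Finset.card_image_le
            _ = k := by simp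
      _ = k * q := by simp [hS', mul_comm]
  · intro x hx y hy hxy
    obtain ⟨j, hj⟩ : ∃ j, x j ≠ y j := by
      by_contra h
      push_neg at h
      exact hxy (funext h)
    set t₀ : Fin k → Fin (n + 1) := fun m => if m = m₀ then j.succ else 0 with ht₀
    have claimA : ∀ z : Fin n → Bool, tensPow n k z t₀ = z j := by
      intro z
      have hfilter : (Finset.univ.filter fun m : Fin k => extendBit z (t₀ m) = true)
          = if z j = true then {m₀} else ∅ := by
        ext m
        by_cases hm : m = m₀ <;> by_cases hz : z j = true <;>
          simp [ht₀, hm, hz, extendBit]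
      rcases hz : z j with _ | _ <;>
        simp [tensPow, hfilter, hz, Nat.odd_iff]
    have hne : tensPow n k x ≠ tensPow n k y := by
      intro h
      exact hj (by rw [← claimA x, ← claimA y, h])
    obtain ⟨t, ht, htne⟩ := hsep x hx y hy hne
    obtain ⟨m, hm⟩ : ∃ m, extendBit x (t m) ≠ extendBit y (t m) := by
      by_contra h
      push_neg at h
      apply htne
      have hfe : (Finset.univ.filter fun m : Fin k => extendBit x (t m) = true)
          = Finset.univ.filter fun m : Fin k => extendBit y (t m) = true := by
        ext m
        simp [h m]
      simp [tensPow, hfe]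
    have h0 : t m ≠ 0 := by
      intro h0
      apply hm
      rw [h0]
      simp [extendBit]
    refine ⟨(t m).pred h0, ?_, ?_⟩
    · refine Finset.mem_biUnion.2 ⟨t, ht, ?_⟩
      simp only [Finset.mem_filter, Finset.mem_univ, true_and]
      exact ⟨m, (Fin.succ_pred _ _).symm⟩
    · have hs : ((t m).pred h0).succ = t m := Fin.succ_pred _ _
      intro heq
      apply hm
      rw [← hs]
      simp only [extendBit, Fin.cases_succ]
      exact heq
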